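/- arXiv:2203.09090 — 2 statements merged into one kernel-verified Lean document; each statement's English description precedes it below -/
import Mathlib

section
/- (Zoutendijk condition) Let L : M → ℝ be a smooth function on a Riemannian manifold M that is bounded below by L*, and suppose at each iterate Σᵢ ∈ M with conjugate direction Dᵢ ∈ T_{Σᵢ}M and step size αᵢ > 0 satisfying: (i) L(R_{Σᵢ}(αᵢDᵢ)) ≤ L(Σᵢ) + c₁αᵢ⟨grad L(Σᵢ), Dᵢ⟩ with 0 < c₁ < 1, (ii) (c₂ − 1)⟨grad L(Σᵢ), Dᵢ⟩ ≤ αᵢ K‖Dᵢ‖² for some constants c₂ ∈ (0,1), K > 0, and (iii) ⟨grad L(Σᵢ), Dᵢ⟩ < 0. Define Σᵢ₊₁ = R_{Σᵢ}(αᵢDᵢ). Then ∑ᵢ₌₁^∞ ⟨grad L(Σᵢ), Dᵢ⟩² / ‖Dᵢ‖² < ∞. -/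
theorem zoutendijk_condition (L g d α : ℕ → ℝ) (c₁ c₂ K Lstar : ℝ)
    (hc₁ : 0 < c₁) (hc₁' : c₁ < 1) (hc₂ : 0 < c₂) (hc₂' : c₂ < 1) (hK : 0 < K)
    (hg : ∀ i, g i < 0) (hd : ∀ i, 0 < d i) (hα : ∀ i, 0 < α i)
    (hwolfe1 : ∀ i, L (i + 1) ≤ L i + c₁ * α i * g i)
    (hwolfe2 : ∀ i, (c₂ - 1) * g i ≤ α i * K * (d i)^2)
    (hbdd : ∀ i, Lstar ≤ L i) :
    Summable (fun i => (g i)^2 / (d i)^2) := by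
  have h1c2 : 0 < 1 - c₂ := by linarith
  have hc : 0 < c₁ * (1 - c₂) / K := by positivity
  have key : ∀ i, c₁ * (1 - c₂) / K * ((g i)^2 / (d i)^2) ≤ L i - L (i + 1) := by
    intro i
    have h1 := hwolfe1 i
    have h2 := hwolfe2 i
    have hdi := hd i
    have hgi := hg i
    have hαi := hα i
    have hd2 : (0:ℝ) < (d i)^2 := by positivity
    rw [div_mul_eq_mul_div, div_le_iff₀ hK, ← mul_div_assoc, div_le_iff₀ hd2]
    nlinarith [mul_le_mul_of_nonneg_left h2 (mul_nonneg hc₁.le (neg_nonneg.mpr hgi.le)),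
      mul_le_mul_of_nonneg_right (show c₁ * α i * (-g i) ≤ L i - L (i + 1) by linarith)
        (mul_nonneg hK.le hd2.le)]
  apply summable_of_sum_range_le (c := K / (c₁ * (1 - c₂)) * (L 0 - Lstar))
  · intro i; positivity
  · intro n
    have tele : ∑ i ∈ Finset.range n, (c₁ * (1 - c₂) / K * ((g i)^2 / (d i)^2)) ≤ L 0 - L n := by
      induction n with
      | zero => simp
      | succ m ih =>
        rw [Finset.sum_range_succ]
        have := key m
        linarith
    have hLn : Lstar ≤ L n := hbdd n
    rw [← Finset.mul_sum, div_mul_eq_mul_div, div_le_iff₀ hK] at tele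
    rw [div_mul_eq_mul_div, le_div_iff₀ (by positivity : (0:ℝ) < c₁ * (1 - c₂))]
    nlinarith [mul_le_mul_of_nonneg_right (by linarith : L 0 - L n ≤ L 0 - Lstar) hK.le]
end

section
/- (Fletcher–Reeves direction bound) Let (gᵢ)ᵢ≥1 be real numbers with g₁ = −G₁ where Gᵢ > 0, and suppose tᵢ = gᵢ/Gᵢ (with Gᵢ = ‖grad L(Σᵢ)‖²) satisfies the recursion bounds −1 + c₂·tᵢ ≤ tᵢ₊₁ ≤ −1 − c₂·tᵢ for all i ≥ 1 with 0 < c₂ < 1/2. Then for every i ≥ 1: −1/(1 − c₂) ≤ tᵢ ≤ (2c₂ − 1)/(1 − c₂). -/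
theorem fletcher_reeves_direction_bound (t : ℕ → ℝ) (c₂ : ℝ)
    (hc₂ : 0 < c₂) (hc₂' : c₂ < 1/2)
    (h0 : t 0 = -1)
    (hrec : ∀ i, -1 + c₂ * t i ≤ t (i + 1) ∧ t (i + 1) ≤ -1 - c₂ * t i) :
    ∀ i, -1 / (1 - c₂) ≤ t i ∧ t i ≤ (2 * c₂ - 1) / (1 - c₂) := by
  have hpos : (0:ℝ) < 1 - c₂ := by linarith
  intro i
  induction i with
  | zero =>
    rw [h0]
    constructor
    · rw [div_le_iff₀ hpos] at *; nlinarith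
    · rw [le_div_iff₀ hpos]; nlinarith
  | succ n ih =>
    obtain ⟨hl, hu⟩ := hrec n
    obtain ⟨il, iu⟩ := ih
    rw [div_le_iff₀ hpos] at il
    constructor
    · rw [div_le_iff₀ hpos]; nlinarith
    · rw [le_div_iff₀ hpos]; nlinarith
end
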